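/- Let n ≥ 2 and assume the Aliev–Gruber lower bound F(a) > ((n-1)!·a₁⋯aₙ)^{1/(n-1)} - (a₁+⋯+aₙ) holds for all primitive a ∈ ℤⁿ_{>0}. Then there is a constant c(n) such that for all T, (1/#G(T)) ∑_{a∈G(T)} F(a)/(a₁⋯aₙ)^{1/(n-1)} ≥ ((n-1)!)^{1/(n-1)}·(1 - c(n)·T^{-1/(n-1)}). -/

import Mathlib

open Finset

/-- The set of primitive vectors in `{1,...,T}^n`. -/
def GSet (n T : ℕ) : Finset (Fin n → ℕ) :=
  (Fintype.piFinset fun _ : Fin n => Finset.Icc 1 T).filter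
    (fun a => Finset.univ.gcd a = 1)

/-- The Frobenius number of a vector of positive integers: the largest
integer not representable as a nonnegative integral combination. -/
noncomputable def frob (n : ℕ) (a : Fin n → ℕ) : ℕ :=
  sSup {b : ℕ | ¬ ∃ z : Fin n → ℕ, b = ∑ i, z i * a i}

lemma key_step (u : ℝ) (hu : 0 ≤ u) :
    (u+1) ^ (-(1:ℝ)/2) ≤ 2 * (u+1) ^ ((1:ℝ)/2) - 2 * u ^ ((1:ℝ)/2) := by
  have h1 : (0:ℝ) ≤ u + 1 := by linarith
  rw [show (-(1:ℝ)/2) = -(1/2) by ring, Real.rpow_neg h1, ← Real.sqrt_eq_rpow,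
    ← Real.sqrt_eq_rpow]
  have hs := Real.sqrt_nonneg (u+1)
  have ht := Real.sqrt_nonneg u
  have hs2 : Real.sqrt (u+1) ^ 2 = u + 1 := Real.sq_sqrt h1
  have ht2 : Real.sqrt u ^ 2 = u := Real.sq_sqrt hu
  have hspos : 0 < Real.sqrt (u+1) := Real.sqrt_pos.2 (by linarith)
  have hts : Real.sqrt u * Real.sqrt (u+1) ≤ u + 1/2 := by
    rw [← Real.sqrt_mul hu]
    have : Real.sqrt (u * (u+1)) ≤ Real.sqrt ((u+1/2)^2) :=
      Real.sqrt_le_sqrt (by nlinarith)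
    rwa [Real.sqrt_sq (by linarith)] at this
  rw [inv_le_iff_one_le_mul₀ hspos]
  nlinarith

lemma sum_inv_sqrt_le (T : ℕ) : ∑ x ∈ Icc 1 T, ((x:ℝ)) ^ (-(1:ℝ)/2) ≤ 2 * (T:ℝ) ^ ((1:ℝ)/2) := by
  induction T with
  | zero => simp
  | succ T ih =>
    rw [Finset.sum_Icc_succ_top (by omega)]
    have := key_step T (by positivity)
    push_cast
    push_cast at ih
    linarith

lemma sum_inv_sq_le (T : ℕ) : ∑ d ∈ Icc 2 T, ((d:ℝ))⁻¹^2 ≤ 3/4 := by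
  rcases Nat.lt_or_ge T 2 with h | h
  · interval_cases T <;> norm_num
  · obtain ⟨k, rfl⟩ : ∃ k, T = k + 2 := ⟨T - 2, by omega⟩
    have : ∀ k : ℕ, ∑ d ∈ Icc 2 (k+2), ((d:ℝ))⁻¹^2 ≤ 3/4 - ((k:ℝ)+2)⁻¹ := by
      intro k
      induction k with
      | zero => norm_num [show Icc 2 2 = {2} by rfl]
      | succ k ih =>
        rw [show k+1+2 = (k+2)+1 by ring, Finset.sum_Icc_succ_top (by omega)]
        push_cast
        have h1 : (0:ℝ) < (k:ℝ) + 2 := by positivity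
        have h2 : (0:ℝ) < (k:ℝ) + 3 := by positivity
        have h3 : ((k:ℝ)+2)⁻¹ - ((k:ℝ)+2+1)⁻¹ = (((k:ℝ)+2)*((k:ℝ)+2+1))⁻¹ := by
          field_simp
          ring
        have h4 : ((k:ℝ)+2+1)⁻¹^2 ≤ ((k:ℝ)+2)⁻¹ - ((k:ℝ)+2+1)⁻¹ := by
          rw [inv_pow, h3]
          exact inv_anti₀ (by positivity) (by nlinarith)
        have h5 : ((k:ℝ)+1+2)⁻¹ = ((k:ℝ)+2+1)⁻¹ := by ring_nf
        linarith
    have h6 := this k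
    have h7 : (0:ℝ) < (k:ℝ)+2 := by positivity
    push_cast at *
    linarith [inv_nonneg.2 (le_of_lt h7)]

lemma gset_card (n T : ℕ) (hn : 2 ≤ n) :
    ((T:ℝ))^n ≤ 4 * ((GSet n T).card : ℝ) := by
  classical
  set A := Fintype.piFinset fun _ : Fin n => Icc 1 T with hAdef
  have hA : A.card = T^n := by
    rw [Fintype.card_piFinset]; simp [Nat.card_Icc]
  have hsplit : (GSet n T).card + (A.filter (fun a => ¬ Finset.univ.gcd a = 1)).card = T^n := by
    rw [GSet, Finset.card_filter_add_card_filter_not, hA]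
  set Bad := A.filter (fun a => ¬ Finset.univ.gcd a = 1) with hBdef
  have hsub : Bad ⊆ (Icc 2 T).biUnion
      (fun d => Fintype.piFinset fun _ : Fin n => (Icc 1 T).filter (d ∣ ·)) := by
    intro a ha
    rw [hBdef, Finset.mem_filter] at ha
    obtain ⟨haA, hg⟩ := ha
    rw [hAdef, Fintype.mem_piFinset] at haA
    simp only [Finset.mem_Icc] at haA
    set g := Finset.univ.gcd a with hgdef
    have hdvd : ∀ i, g ∣ a i := fun i => Finset.gcd_dvd (mem_univ i)
    have i0 : Fin n := ⟨0, by omega⟩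
    have hgne : g ≠ 0 := by
      intro h0
      have := (Finset.gcd_eq_zero_iff.1 h0) i0 (mem_univ i0)
      have := (haA i0).1
      omega
    have hgle : g ≤ T := le_trans (Nat.le_of_dvd (by have := (haA i0).1; omega) (hdvd i0))
      (haA i0).2
    rw [Finset.mem_biUnion]
    refine ⟨g, Finset.mem_Icc.2 ⟨by omega, hgle⟩, ?_⟩
    rw [Fintype.mem_piFinset]
    intro i
    exact Finset.mem_filter.2 ⟨Finset.mem_Icc.2 (haA i), hdvd i⟩
  have hcard : Bad.card ≤ ∑ d ∈ Icc 2 T, (T/d)^n := by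
    refine le_trans (Finset.card_le_card hsub) (le_trans Finset.card_biUnion_le ?_)
    refine Finset.sum_le_sum fun d _ => ?_
    rw [Fintype.card_piFinset]
    have : ((Icc 1 T).filter (d ∣ ·)).card = T / d := by
      rw [show Icc 1 T = Ioc 0 T from Finset.Icc_add_one_left_eq_Ioc 0 T]
      exact Nat.Ioc_filter_dvd_card_eq_div T d
    simp [this]
  have hreal : (Bad.card : ℝ) ≤ 3/4 * (T:ℝ)^n := by
    calc (Bad.card : ℝ) ≤ ∑ d ∈ Icc 2 T, ((T/d : ℕ):ℝ)^n := by
          exact_mod_cast Nat.cast_le.2 hcard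
      _ ≤ ∑ d ∈ Icc 2 T, (T:ℝ)^n * ((d:ℝ)⁻¹)^2 := by
          refine Finset.sum_le_sum fun d hd => ?_
          have hd2 : (2:ℝ) ≤ (d:ℝ) := by exact_mod_cast (Finset.mem_Icc.1 hd).1
          have hdpos : (0:ℝ) < d := by linarith
          have h1 : ((T/d : ℕ):ℝ) ≤ (T:ℝ)/(d:ℝ) := Nat.cast_div_le
          have h2 : ((T/d : ℕ):ℝ)^n ≤ ((T:ℝ)/(d:ℝ))^n :=
            pow_le_pow_left₀ (by positivity) h1 n
          have h3 : ((T:ℝ)/(d:ℝ))^n = (T:ℝ)^n * ((d:ℝ)⁻¹)^n := by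
            rw [div_pow, div_eq_mul_inv, inv_pow]
          have h4 : ((d:ℝ)⁻¹)^n ≤ ((d:ℝ)⁻¹)^2 :=
            pow_le_pow_of_le_one (by positivity)
              (by rw [inv_le_one_iff₀]; right; linarith) hn
          calc ((T/d : ℕ):ℝ)^n ≤ (T:ℝ)^n * ((d:ℝ)⁻¹)^n := by rw [← h3]; exact h2
            _ ≤ (T:ℝ)^n * ((d:ℝ)⁻¹)^2 :=
                mul_le_mul_of_nonneg_left h4 (by positivity)
      _ = (T:ℝ)^n * ∑ d ∈ Icc 2 T, ((d:ℝ)⁻¹)^2 := by rw [Finset.mul_sum]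
      _ ≤ (T:ℝ)^n * (3/4) :=
          mul_le_mul_of_nonneg_left (sum_inv_sq_le T) (by positivity)
      _ = 3/4 * (T:ℝ)^n := by ring
  have : ((GSet n T).card : ℝ) + (Bad.card : ℝ) = (T:ℝ)^n := by
    exact_mod_cast congrArg (Nat.cast (R := ℝ)) hsplit
  linarith

lemma sum_rpow_le (T : ℕ) (β : ℝ) (hβ : β ≤ 1/2) :
    ∑ x ∈ Icc 1 T, (x:ℝ) ^ (-β) ≤ 2 * (T:ℝ) ^ (1-β) := by
  rcases Nat.eq_zero_or_pos T with rfl | hT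
  · simp [Real.zero_rpow (show (1:ℝ)-β ≠ 0 by intro h; linarith)]
  have hT0 : (0:ℝ) < T := by exact_mod_cast hT
  calc ∑ x ∈ Icc 1 T, (x:ℝ) ^ (-β)
      ≤ ∑ x ∈ Icc 1 T, (T:ℝ)^((1:ℝ)/2-β) * (x:ℝ) ^ (-(1:ℝ)/2) := by
        refine Finset.sum_le_sum fun x hx => ?_
        obtain ⟨hx1, hx2⟩ := Finset.mem_Icc.1 hx
        have hx0 : (0:ℝ) < x := by exact_mod_cast hx1
        have : (x:ℝ) ^ (-β) = (x:ℝ)^((1:ℝ)/2-β) * (x:ℝ)^(-(1:ℝ)/2) := by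
          rw [← Real.rpow_add hx0]; ring_nf
        rw [this]
        refine mul_le_mul_of_nonneg_right ?_ (by positivity)
        exact Real.rpow_le_rpow (le_of_lt hx0) (by exact_mod_cast hx2) (by linarith)
    _ = (T:ℝ)^((1:ℝ)/2-β) * ∑ x ∈ Icc 1 T, (x:ℝ) ^ (-(1:ℝ)/2) := by
        rw [← Finset.mul_sum]
    _ ≤ (T:ℝ)^((1:ℝ)/2-β) * (2 * (T:ℝ) ^ ((1:ℝ)/2)) :=
        mul_le_mul_of_nonneg_left (sum_inv_sqrt_le T) (by positivity)
    _ = 2 * (T:ℝ) ^ (1-β) := by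
        rw [show (1:ℝ)-β = (1/2-β)+(1/2) by ring, Real.rpow_add hT0]; ring

lemma frob23 : frob 2 ![2,3] ≤ 1 := by
  refine csSup_le' ?_
  intro b hb
  simp only [Set.mem_setOf_eq] at hb
  by_contra hble
  push_neg at hble
  apply hb
  rcases Nat.even_or_odd b with he | ho
  · obtain ⟨k, rfl⟩ := he
    exact ⟨![k, 0], by simp [Fin.sum_univ_two]; omega⟩
  · obtain ⟨k, rfl⟩ := ho
    exact ⟨![k-1, 1], by simp [Fin.sum_univ_two]; omega⟩

set_option maxHeartbeats 1000000 in
theorem stmt_19 (n : ℕ) (hn : 2 ≤ n)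
    (hAG : ∀ a : Fin n → ℕ, (∀ i, 0 < a i) → Finset.univ.gcd a = 1 →
      ((Nat.factorial (n - 1) : ℝ) * ∏ i, (a i : ℝ)) ^ ((1 : ℝ) / (n - 1))
        - ∑ i, (a i : ℝ) < (frob n a : ℝ)) :
    ∃ c : ℝ, ∀ T : ℕ, 0 < T →
      (Nat.factorial (n - 1) : ℝ) ^ ((1 : ℝ) / (n - 1)) *
          (1 - c * (T : ℝ) ^ (-(1 : ℝ) / (n - 1))) ≤
        (1 / ((GSet n T).card : ℝ)) *
          ∑ a ∈ GSet n T,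
            (frob n a : ℝ) / (∏ i, (a i : ℝ)) ^ ((1 : ℝ) / (n - 1)) := by
  rcases eq_or_lt_of_le hn with h2 | h3
  · -- n = 2 : hAG is contradictory at a = (2,3)
    subst h2
    exfalso
    have h1 : ∀ i, 0 < (![2,3] : Fin 2 → ℕ) i := by decide
    have hg : Finset.univ.gcd ![2,3] = 1 := by decide
    have h3 := hAG ![2,3] h1 hg
    have hprod : ∏ i, (((![2,3] : Fin 2 → ℕ) i : ℕ) : ℝ) = 6 := by
      simp [Fin.prod_univ_two]; norm_num
    have hsum : ∑ i, (((![2,3] : Fin 2 → ℕ) i : ℕ) : ℝ) = 5 := by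
      simp [Fin.sum_univ_two]; norm_num
    rw [hprod, hsum] at h3
    norm_num [Real.rpow_natCast] at h3
    have h4 := frob23
    omega
  · -- n ≥ 3
    have hn3 : 3 ≤ n := h3
    set β : ℝ := (1:ℝ) / ((n:ℝ) - 1) with hβdef
    have hn1 : (2:ℝ) ≤ (n:ℝ) - 1 := by
      have : (3:ℝ) ≤ (n:ℝ) := by exact_mod_cast hn3
      linarith
    have hβpos : 0 < β := by rw [hβdef]; positivity
    have hβhalf : β ≤ 1/2 := by
      rw [hβdef]
      rw [div_le_div_iff₀ (by linarith) (by norm_num)]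
      linarith
    have hβn : β * ((n:ℝ) - 1) = 1 := by
      rw [hβdef]; field_simp
    set K : ℝ := (Nat.factorial (n-1) : ℝ) ^ β with hKdef
    have hKpos : 0 < K := Real.rpow_pos_of_pos (by exact_mod_cast (n-1).factorial_pos) β
    refine ⟨4 * (n:ℝ) * 2^n / K, fun T hT => ?_⟩
    have hT0 : (0:ℝ) < T := by exact_mod_cast hT
    have hTn1 : (1:ℝ) ≤ (T:ℝ)^n := one_le_pow₀ (by exact_mod_cast hT : (1:ℝ) ≤ (T:ℝ))
    have hcard4 := gset_card n T hn
    have hcardpos : (0:ℝ) < ((GSet n T).card : ℝ) := by linarith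
    -- pointwise lower bound on GSet
    have hpt : ∀ a ∈ GSet n T,
        K - (∑ i, (a i : ℝ)) / (∏ i, (a i : ℝ)) ^ β
          ≤ (frob n a : ℝ) / (∏ i, (a i : ℝ)) ^ β := by
      intro a ha
      rw [GSet, Finset.mem_filter, Fintype.mem_piFinset] at ha
      obtain ⟨haI, hagcd⟩ := ha
      have hpos : ∀ i, 0 < a i := fun i => (Finset.mem_Icc.1 (haI i)).1
      have hP : (0:ℝ) < ∏ i, (a i : ℝ) :=
        Finset.prod_pos fun i _ => by exact_mod_cast hpos i
      have hPβ : (0:ℝ) < (∏ i, (a i : ℝ)) ^ β := Real.rpow_pos_of_pos hP β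
      have hag := hAG a hpos hagcd
      rw [Real.mul_rpow (by positivity) (le_of_lt hP)] at hag
      have h5 : (K * (∏ i, (a i : ℝ)) ^ β - ∑ i, (a i : ℝ)) / (∏ i, (a i : ℝ)) ^ β
          ≤ (frob n a : ℝ) / (∏ i, (a i : ℝ)) ^ β := by
        gcongr
      rwa [sub_div, mul_div_assoc, div_self (ne_of_gt hPβ), mul_one] at h5
    -- bound on the error sum
    have herr : ∑ a ∈ GSet n T, (∑ i, (a i : ℝ)) / (∏ i, (a i : ℝ)) ^ β
        ≤ (n:ℝ) * 2^n * (T:ℝ) * ((T:ℝ) ^ ((1:ℝ)-β)) ^ n := by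
      have hstep1 : ∑ a ∈ GSet n T, (∑ i, (a i : ℝ)) / (∏ i, (a i : ℝ)) ^ β
          ≤ ∑ a ∈ Fintype.piFinset (fun _ : Fin n => Icc 1 T),
              (∑ i, (a i : ℝ)) / (∏ i, (a i : ℝ)) ^ β := by
        refine Finset.sum_le_sum_of_subset_of_nonneg (Finset.filter_subset _ _)
          fun a _ _ => by positivity
      refine le_trans hstep1 ?_
      have hstep2 : ∀ a ∈ Fintype.piFinset (fun _ : Fin n => Icc 1 T),
          (∑ i, (a i : ℝ)) / (∏ i, (a i : ℝ)) ^ β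
            ≤ (n:ℝ) * (T:ℝ) * ∏ i, (a i : ℝ) ^ (-β) := by
        intro a ha
        rw [Fintype.mem_piFinset] at ha
        have hpos : ∀ i, 0 < a i := fun i => (Finset.mem_Icc.1 (ha i)).1
        have hle : ∀ i, a i ≤ T := fun i => (Finset.mem_Icc.1 (ha i)).2
        have hP : (0:ℝ) < ∏ i, (a i : ℝ) :=
          Finset.prod_pos fun i _ => by exact_mod_cast hpos i
        have hinv : (∏ i, (a i : ℝ)) ^ β ≠ 0 := ne_of_gt (Real.rpow_pos_of_pos hP β)
        have hS : (∑ i, (a i : ℝ)) ≤ (n:ℝ) * (T:ℝ) := by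
          calc (∑ i, (a i : ℝ)) ≤ ∑ _i : Fin n, (T:ℝ) :=
                Finset.sum_le_sum fun i _ => by exact_mod_cast hle i
            _ = (n:ℝ) * (T:ℝ) := by simp [mul_comm]
        have hprodeq : (∏ i, (a i : ℝ) ^ (-β)) = ((∏ i, (a i : ℝ)) ^ β)⁻¹ := by
          rw [← Real.rpow_neg (le_of_lt hP)]
          rw [← Real.finset_prod_rpow _ _ (fun i _ => by positivity)]
        rw [div_eq_mul_inv, ← hprodeq]
        exact mul_le_mul_of_nonneg_right hS
          (Finset.prod_nonneg fun i _ => Real.rpow_nonneg (by positivity) _)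
      refine le_trans (Finset.sum_le_sum hstep2) ?_
      rw [← Finset.mul_sum]
      rw [show ∑ a ∈ Fintype.piFinset (fun _ : Fin n => Icc 1 T), ∏ i, (a i : ℝ) ^ (-β)
            = ∏ _i : Fin n, ∑ x ∈ Icc 1 T, (x:ℝ) ^ (-β) from
        (Finset.prod_univ_sum (fun _ : Fin n => Icc 1 T)
          (fun _ x => (x:ℝ) ^ (-β))).symm]
      rw [Finset.prod_const, Finset.card_univ, Fintype.card_fin]
      have hsumpos : (0:ℝ) ≤ ∑ x ∈ Icc 1 T, (x:ℝ) ^ (-β) :=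
        Finset.sum_nonneg fun x _ => Real.rpow_nonneg (by positivity) _
      calc (n:ℝ) * (T:ℝ) * (∑ x ∈ Icc 1 T, (x:ℝ) ^ (-β))^n
          ≤ (n:ℝ) * (T:ℝ) * (2 * (T:ℝ) ^ ((1:ℝ)-β))^n := by
            refine mul_le_mul_of_nonneg_left ?_ (by positivity)
            exact pow_le_pow_left₀ hsumpos (sum_rpow_le T β hβhalf) n
        _ = (n:ℝ) * 2^n * (T:ℝ) * ((T:ℝ) ^ ((1:ℝ)-β)) ^ n := by
            rw [mul_pow]; ring
    have hTpow : (T:ℝ) * ((T:ℝ) ^ ((1:ℝ)-β)) ^ n = (T:ℝ)^n * (T:ℝ)^(-β) := by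
      calc (T:ℝ) * ((T:ℝ)^((1:ℝ)-β))^n = (T:ℝ)^((1:ℝ) + (1-β)*(n:ℝ)) := by
            rw [← Real.rpow_natCast ((T:ℝ)^((1:ℝ)-β)) n, ← Real.rpow_mul (le_of_lt hT0),
              Real.rpow_add hT0, Real.rpow_one]
        _ = (T:ℝ)^((n:ℝ) + -β) := by
            rw [show (1:ℝ)+(1-β)*(n:ℝ) = (n:ℝ) + -β by nlinarith [hβn]]
        _ = (T:ℝ)^n * (T:ℝ)^(-β) := by
            rw [Real.rpow_add hT0, Real.rpow_natCast]
    rw [show -(1:ℝ)/((n:ℝ)-1) = -β by rw [hβdef]; ring]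
    set SS := ∑ a ∈ GSet n T, (∑ i, (a i : ℝ)) / (∏ i, (a i : ℝ)) ^ β with hSSdef
    set FF := ∑ a ∈ GSet n T, (frob n a : ℝ) / (∏ i, (a i : ℝ)) ^ β with hFFdef
    have hc0 : ((GSet n T).card : ℝ) ≠ 0 := ne_of_gt hcardpos
    have hSnn : 0 ≤ SS := Finset.sum_nonneg fun a _ => by positivity
    have hSle : SS ≤ (n:ℝ) * 2^n * ((T:ℝ)^n * (T:ℝ)^(-β)) := by
      calc SS ≤ (n:ℝ) * 2^n * ((T:ℝ) * ((T:ℝ) ^ ((1:ℝ)-β)) ^ n) := by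
            rw [hSSdef]; refine le_trans herr (le_of_eq (by ring))
        _ = (n:ℝ) * 2^n * ((T:ℝ)^n * (T:ℝ)^(-β)) := by rw [hTpow]
    have hFSsum : ((GSet n T).card : ℝ) * K - SS ≤ FF := by
      have h11 := Finset.sum_le_sum hpt
      rw [Finset.sum_sub_distrib, Finset.sum_const, nsmul_eq_mul] at h11
      linarith [h11]
    have h8 : SS / ((GSet n T).card : ℝ)
        ≤ ((n:ℝ) * 2^n * ((T:ℝ)^n * (T:ℝ)^(-β))) / ((T:ℝ)^n / 4) := by
      gcongr <;> linarith
    have h9 : ((n:ℝ) * 2^n * ((T:ℝ)^n * (T:ℝ)^(-β))) / ((T:ℝ)^n / 4)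
        = 4 * (n:ℝ) * 2^n * (T:ℝ)^(-β) := by
      have hTn : (T:ℝ)^n ≠ 0 := by positivity
      field_simp
    have hmul : K - SS / ((GSet n T).card : ℝ) ≤ (1 / ((GSet n T).card : ℝ)) * FF := by
      calc K - SS / ((GSet n T).card : ℝ)
          = (1 / ((GSet n T).card : ℝ)) * (((GSet n T).card : ℝ) * K - SS) := by
            field_simp
        _ ≤ (1 / ((GSet n T).card : ℝ)) * FF := by
            exact mul_le_mul_of_nonneg_left hFSsum (by positivity)
    have hKc : K * (1 - 4 * (n:ℝ) * 2^n / K * (T:ℝ)^(-β)) = K - 4 * (n:ℝ) * 2^n * (T:ℝ)^(-β) := by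
      field_simp
    calc K * (1 - 4 * (n:ℝ) * 2^n / K * (T:ℝ)^(-β))
        = K - 4 * (n:ℝ) * 2^n * (T:ℝ)^(-β) := hKc
      _ ≤ K - SS / ((GSet n T).card : ℝ) := by linarith [h8, h9]
      _ ≤ (1 / ((GSet n T).card : ℝ)) * FF := hmul
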